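/- Let X₁,...,X_n be i.i.d. random vectors from F_X and Y₁,...,Y_m i.i.d. from F_Y, samples independent, and let k be a symmetric kernel with E|k(X,X')| + E|k(X,Y)| + E|k(Y,Y')| < ∞. Let h be the two-sample energy kernel h(X₁,X₂,Y₁,Y₂) = (1/2)Σ_{i,j}k(Xᵢ,Yⱼ) − k(X₁,X₂) − k(Y₁,Y₂), and let h_{cd} denote its partial expectations (expectation over all but the first c X-arguments and d Y-arguments). Then the Hoeffding-projection kernel of order (2,2), defined as h^{(2,2)}(X₁,X₂,Y₁,Y₂) = h − Σ h_{21} terms − Σ h_{12} terms + h_{20} + h_{02} + Σ h_{11} terms − Σ h_{10} terms − Σ h_{01} terms + E[h] (with the standard inclusion–exclusion pattern), is identically zero; likewise the order-(2,1) and order-(1,2) projection kernels h^{(2,1)} and h^{(1,2)} are identically zero. -/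
import Mathlib


open MeasureTheory

/-- The two-sample energy kernel
`h(x₁,x₂,y₁,y₂) = (1/2)·Σᵢⱼ k(xᵢ,yⱼ) − k(x₁,x₂) − k(y₁,y₂)`. -/
noncomputable def hker {p : ℕ} (k : (Fin p → ℝ) → (Fin p → ℝ) → ℝ)
    (x₁ x₂ y₁ y₂ : Fin p → ℝ) : ℝ :=
  (1 / 2) * (k x₁ y₁ + k x₁ y₂ + k x₂ y₁ + k x₂ y₂) - k x₁ x₂ - k y₁ y₂

variable {p : ℕ}

/-- Partial expectation `h₂₁(x₁,x₂,y₁) = E_{Y₂}[h(x₁,x₂,y₁,Y₂)]`. -/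
noncomputable def h21 (ν₂ : Measure (Fin p → ℝ)) (k : (Fin p → ℝ) → (Fin p → ℝ) → ℝ)
    (x₁ x₂ y₁ : Fin p → ℝ) : ℝ :=
  ∫ v₂, hker k x₁ x₂ y₁ v₂ ∂ν₂

/-- Partial expectation `h₁₂(x₁,y₁,y₂) = E_{X₂}[h(x₁,X₂,y₁,y₂)]`. -/
noncomputable def h12 (ν₁ : Measure (Fin p → ℝ)) (k : (Fin p → ℝ) → (Fin p → ℝ) → ℝ)
    (x₁ y₁ y₂ : Fin p → ℝ) : ℝ :=
  ∫ u₂, hker k x₁ u₂ y₁ y₂ ∂ν₁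

/-- Partial expectation `h₂₀(x₁,x₂) = E_{Y₁,Y₂}[h(x₁,x₂,Y₁,Y₂)]`. -/
noncomputable def h20 (ν₂ : Measure (Fin p → ℝ)) (k : (Fin p → ℝ) → (Fin p → ℝ) → ℝ)
    (x₁ x₂ : Fin p → ℝ) : ℝ :=
  ∫ v₁, ∫ v₂, hker k x₁ x₂ v₁ v₂ ∂ν₂ ∂ν₂

/-- Partial expectation `h₀₂(y₁,y₂) = E_{X₁,X₂}[h(X₁,X₂,y₁,y₂)]`. -/
noncomputable def h02 (ν₁ : Measure (Fin p → ℝ)) (k : (Fin p → ℝ) → (Fin p → ℝ) → ℝ)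
    (y₁ y₂ : Fin p → ℝ) : ℝ :=
  ∫ u₁, ∫ u₂, hker k u₁ u₂ y₁ y₂ ∂ν₁ ∂ν₁

/-- Partial expectation `h₁₁(x₁,y₁) = E_{X₂,Y₂}[h(x₁,X₂,y₁,Y₂)]`. -/
noncomputable def h11 (ν₁ ν₂ : Measure (Fin p → ℝ)) (k : (Fin p → ℝ) → (Fin p → ℝ) → ℝ)
    (x₁ y₁ : Fin p → ℝ) : ℝ :=
  ∫ u₂, ∫ v₂, hker k x₁ u₂ y₁ v₂ ∂ν₂ ∂ν₁

/-- Partial expectation `h₁₀(x₁) = E_{X₂,Y₁,Y₂}[h(x₁,X₂,Y₁,Y₂)]`. -/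
noncomputable def h10 (ν₁ ν₂ : Measure (Fin p → ℝ)) (k : (Fin p → ℝ) → (Fin p → ℝ) → ℝ)
    (x₁ : Fin p → ℝ) : ℝ :=
  ∫ u₂, ∫ v₁, ∫ v₂, hker k x₁ u₂ v₁ v₂ ∂ν₂ ∂ν₂ ∂ν₁

/-- Partial expectation `h₀₁(y₁) = E_{X₁,X₂,Y₂}[h(X₁,X₂,y₁,Y₂)]`. -/
noncomputable def h01 (ν₁ ν₂ : Measure (Fin p → ℝ)) (k : (Fin p → ℝ) → (Fin p → ℝ) → ℝ)
    (y₁ : Fin p → ℝ) : ℝ :=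
  ∫ u₁, ∫ u₂, ∫ v₂, hker k u₁ u₂ y₁ v₂ ∂ν₂ ∂ν₁ ∂ν₁

/-- Full expectation `E[h(X₁,X₂,Y₁,Y₂)]`. -/
noncomputable def hMean (ν₁ ν₂ : Measure (Fin p → ℝ))
    (k : (Fin p → ℝ) → (Fin p → ℝ) → ℝ) : ℝ :=
  ∫ u₁, ∫ u₂, ∫ v₁, ∫ v₂, hker k u₁ u₂ v₁ v₂ ∂ν₂ ∂ν₂ ∂ν₁ ∂ν₁


private lemma int6 {α : Type*} [MeasurableSpace α] (μ : Measure α)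
    (f₁ f₂ f₃ f₄ f₅ f₆ : α → ℝ) (h₁ : Integrable f₁ μ) (h₂ : Integrable f₂ μ)
    (h₃ : Integrable f₃ μ) (h₄ : Integrable f₄ μ) (h₅ : Integrable f₅ μ)
    (h₆ : Integrable f₆ μ) :
    ∫ w, ((1 / 2 : ℝ) * (f₁ w + f₂ w + f₃ w + f₄ w) - f₅ w - f₆ w) ∂μ
      = (1 / 2) * ((∫ w, f₁ w ∂μ) + (∫ w, f₂ w ∂μ) + (∫ w, f₃ w ∂μ) + (∫ w, f₄ w ∂μ))
        - (∫ w, f₅ w ∂μ) - (∫ w, f₆ w ∂μ) := by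
  have hA : Integrable (fun w => f₁ w + f₂ w + f₃ w + f₄ w) μ := ((h₁.add h₂).add h₃).add h₄
  have hC : Integrable (fun w => (1 / 2 : ℝ) * (f₁ w + f₂ w + f₃ w + f₄ w)) μ := hA.const_mul _
  have hB : Integrable (fun w => (1 / 2 : ℝ) * (f₁ w + f₂ w + f₃ w + f₄ w) - f₅ w) μ :=
    hC.sub h₅
  have h12 : Integrable (fun w => f₁ w + f₂ w) μ := h₁.add h₂
  have h123 : Integrable (fun w => f₁ w + f₂ w + f₃ w) μ := h12.add h₃
  rw [integral_sub hB h₆, integral_sub hC h₅,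
    integral_const_mul, integral_add h123 h₄, integral_add h12 h₃,
    integral_add h₁ h₂]

/-- The Hoeffding-projection kernels of orders `(2,2)`, `(2,1)` and `(1,2)` of the
two-sample energy kernel `h` vanish identically. -/
theorem stmt_19 (ν₁ ν₂ : Measure (Fin p → ℝ))
    [IsProbabilityMeasure ν₁] [IsProbabilityMeasure ν₂]
    (k : (Fin p → ℝ) → (Fin p → ℝ) → ℝ)
    (hk : Measurable fun q : (Fin p → ℝ) × (Fin p → ℝ) => k q.1 q.2)
    (hsymm : ∀ x y, k x y = k y x)
    (hint1 : ∀ x, Integrable (fun w => k x w) ν₁)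
    (hint2 : ∀ x, Integrable (fun w => k x w) ν₂)
    (hint11 : Integrable (fun q : (Fin p → ℝ) × (Fin p → ℝ) => k q.1 q.2) (ν₁.prod ν₁))
    (hint12 : Integrable (fun q : (Fin p → ℝ) × (Fin p → ℝ) => k q.1 q.2) (ν₁.prod ν₂))
    (hint22 : Integrable (fun q : (Fin p → ℝ) × (Fin p → ℝ) => k q.1 q.2) (ν₂.prod ν₂)) :
    ∀ x₁ x₂ y₁ y₂ : Fin p → ℝ,
      (hker k x₁ x₂ y₁ y₂
          - h21 ν₂ k x₁ x₂ y₁ - h21 ν₂ k x₁ x₂ y₂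
          - h12 ν₁ k x₁ y₁ y₂ - h12 ν₁ k x₂ y₁ y₂
          + h20 ν₂ k x₁ x₂ + h02 ν₁ k y₁ y₂
          + h11 ν₁ ν₂ k x₁ y₁ + h11 ν₁ ν₂ k x₁ y₂ + h11 ν₁ ν₂ k x₂ y₁ + h11 ν₁ ν₂ k x₂ y₂
          - h10 ν₁ ν₂ k x₁ - h10 ν₁ ν₂ k x₂ - h01 ν₁ ν₂ k y₁ - h01 ν₁ ν₂ k y₂
          + hMean ν₁ ν₂ k = 0) ∧
      (h21 ν₂ k x₁ x₂ y₁ - h20 ν₂ k x₁ x₂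
          - h11 ν₁ ν₂ k x₁ y₁ - h11 ν₁ ν₂ k x₂ y₁
          + h10 ν₁ ν₂ k x₁ + h10 ν₁ ν₂ k x₂ + h01 ν₁ ν₂ k y₁ - hMean ν₁ ν₂ k = 0) ∧
      (h12 ν₁ k x₁ y₁ y₂ - h02 ν₁ k y₁ y₂
          - h11 ν₁ ν₂ k x₁ y₁ - h11 ν₁ ν₂ k x₁ y₂
          + h10 ν₁ ν₂ k x₁ + h01 ν₁ ν₂ k y₁ + h01 ν₁ ν₂ k y₂ - hMean ν₁ ν₂ k = 0) := by
  -- shorthand integrals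
  have hsy : ∀ b : Fin p → ℝ, Integrable (fun u => k u b) ν₁ :=
    fun b => (hint1 b).congr (Filter.Eventually.of_forall fun u => hsymm b u)
  have hsyI : ∀ b : Fin p → ℝ, (∫ u, k u b ∂ν₁) = ∫ w, k b w ∂ν₁ :=
    fun b => integral_congr_ae (Filter.Eventually.of_forall fun u => hsymm u b)
  have hm2ν1 : Integrable (fun u => ∫ w, k u w ∂ν₂) ν₁ := hint12.integral_prod_left
  have hm1ν1 : Integrable (fun u => ∫ w, k u w ∂ν₁) ν₁ := hint11.integral_prod_left
  have hm2ν2 : Integrable (fun u => ∫ w, k u w ∂ν₂) ν₂ := hint22.integral_prod_left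
  have F21 : ∀ a b c : Fin p → ℝ, h21 ν₂ k a b c
      = (1 / 2) * (k a c + (∫ w, k a w ∂ν₂) + k b c + (∫ w, k b w ∂ν₂))
        - k a b - (∫ w, k c w ∂ν₂) := by
    intro a b c
    have := int6 ν₂ (fun _ => k a c) (fun w => k a w) (fun _ => k b c) (fun w => k b w)
      (fun _ => k a b) (fun w => k c w) (integrable_const _) (hint2 a) (integrable_const _)
      (hint2 b) (integrable_const _) (hint2 c)
    simpa [h21, hker] using this
  have F12 : ∀ a b c : Fin p → ℝ, h12 ν₁ k a b c
      = (1 / 2) * (k a b + k a c + (∫ w, k b w ∂ν₁) + (∫ w, k c w ∂ν₁))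
        - (∫ w, k a w ∂ν₁) - k b c := by
    intro a b c
    have := int6 ν₁ (fun _ => k a b) (fun _ => k a c) (fun u => k u b) (fun u => k u c)
      (fun u => k a u) (fun _ => k b c) (integrable_const _) (integrable_const _)
      (hsy b) (hsy c) (hint1 a) (integrable_const _)
    simpa [h12, hker, hsyI] using this
  have F20 : ∀ a b : Fin p → ℝ, h20 ν₂ k a b
      = (1 / 2) * ((∫ w, k a w ∂ν₂) + (∫ w, k a w ∂ν₂) + (∫ w, k b w ∂ν₂) + (∫ w, k b w ∂ν₂))
        - k a b - (∫ v, ∫ w, k v w ∂ν₂ ∂ν₂) := by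
    intro a b
    have h1 : h20 ν₂ k a b = ∫ v₁, ((1 / 2) * (k a v₁ + (∫ w, k a w ∂ν₂) + k b v₁
        + (∫ w, k b w ∂ν₂)) - k a b - (∫ w, k v₁ w ∂ν₂)) ∂ν₂ :=
      integral_congr_ae (Filter.Eventually.of_forall fun v₁ => F21 a b v₁)
    rw [h1]
    have := int6 ν₂ (fun v => k a v) (fun _ => ∫ w, k a w ∂ν₂) (fun v => k b v)
      (fun _ => ∫ w, k b w ∂ν₂) (fun _ => k a b) (fun v => ∫ w, k v w ∂ν₂)
      (hint2 a) (integrable_const _) (hint2 b) (integrable_const _) (integrable_const _) hm2ν2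
    simpa using this
  have F02 : ∀ a b : Fin p → ℝ, h02 ν₁ k a b
      = (1 / 2) * ((∫ w, k a w ∂ν₁) + (∫ w, k b w ∂ν₁) + (∫ w, k a w ∂ν₁) + (∫ w, k b w ∂ν₁))
        - (∫ v, ∫ w, k v w ∂ν₁ ∂ν₁) - k a b := by
    intro a b
    have h1 : h02 ν₁ k a b = ∫ u₁, ((1 / 2) * (k u₁ a + k u₁ b + (∫ w, k a w ∂ν₁)
        + (∫ w, k b w ∂ν₁)) - (∫ w, k u₁ w ∂ν₁) - k a b) ∂ν₁ :=
      integral_congr_ae (Filter.Eventually.of_forall fun u₁ => F12 u₁ a b)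
    rw [h1]
    have := int6 ν₁ (fun u => k u a) (fun u => k u b) (fun _ => ∫ w, k a w ∂ν₁)
      (fun _ => ∫ w, k b w ∂ν₁) (fun u => ∫ w, k u w ∂ν₁) (fun _ => k a b)
      (hsy a) (hsy b) (integrable_const _) (integrable_const _) hm1ν1 (integrable_const _)
    simpa [hsyI] using this
  have F11 : ∀ a b : Fin p → ℝ, h11 ν₁ ν₂ k a b
      = (1 / 2) * (k a b + (∫ w, k a w ∂ν₂) + (∫ w, k b w ∂ν₁) + (∫ u, ∫ w, k u w ∂ν₂ ∂ν₁))
        - (∫ w, k a w ∂ν₁) - (∫ w, k b w ∂ν₂) := by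
    intro a b
    have h1 : h11 ν₁ ν₂ k a b = ∫ u₂, ((1 / 2) * (k a b + (∫ w, k a w ∂ν₂) + k u₂ b
        + (∫ w, k u₂ w ∂ν₂)) - k a u₂ - (∫ w, k b w ∂ν₂)) ∂ν₁ :=
      integral_congr_ae (Filter.Eventually.of_forall fun u₂ => F21 a u₂ b)
    rw [h1]
    have := int6 ν₁ (fun _ => k a b) (fun _ => ∫ w, k a w ∂ν₂) (fun u => k u b)
      (fun u => ∫ w, k u w ∂ν₂) (fun u => k a u) (fun _ => ∫ w, k b w ∂ν₂)
      (integrable_const _) (integrable_const _) (hsy b) hm2ν1 (hint1 a) (integrable_const _)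
    simpa [hsyI] using this
  have F10 : ∀ a : Fin p → ℝ, h10 ν₁ ν₂ k a
      = (1 / 2) * ((∫ w, k a w ∂ν₂) + (∫ w, k a w ∂ν₂) + (∫ u, ∫ w, k u w ∂ν₂ ∂ν₁)
          + (∫ u, ∫ w, k u w ∂ν₂ ∂ν₁))
        - (∫ w, k a w ∂ν₁) - (∫ v, ∫ w, k v w ∂ν₂ ∂ν₂) := by
    intro a
    have h1 : h10 ν₁ ν₂ k a = ∫ u₂, ((1 / 2) * ((∫ w, k a w ∂ν₂) + (∫ w, k a w ∂ν₂)
        + (∫ w, k u₂ w ∂ν₂) + (∫ w, k u₂ w ∂ν₂)) - k a u₂ - (∫ v, ∫ w, k v w ∂ν₂ ∂ν₂)) ∂ν₁ :=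
      integral_congr_ae (Filter.Eventually.of_forall fun u₂ => F20 a u₂)
    rw [h1]
    have := int6 ν₁ (fun _ => ∫ w, k a w ∂ν₂) (fun _ => ∫ w, k a w ∂ν₂)
      (fun u => ∫ w, k u w ∂ν₂) (fun u => ∫ w, k u w ∂ν₂) (fun u => k a u)
      (fun _ => ∫ v, ∫ w, k v w ∂ν₂ ∂ν₂)
      (integrable_const _) (integrable_const _) hm2ν1 hm2ν1 (hint1 a) (integrable_const _)
    simpa using this
  have F01 : ∀ b : Fin p → ℝ, h01 ν₁ ν₂ k b
      = (1 / 2) * ((∫ w, k b w ∂ν₁) + (∫ u, ∫ w, k u w ∂ν₂ ∂ν₁) + (∫ w, k b w ∂ν₁)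
          + (∫ u, ∫ w, k u w ∂ν₂ ∂ν₁))
        - (∫ v, ∫ w, k v w ∂ν₁ ∂ν₁) - (∫ w, k b w ∂ν₂) := by
    intro b
    have h1 : h01 ν₁ ν₂ k b = ∫ u₁, ((1 / 2) * (k u₁ b + (∫ w, k u₁ w ∂ν₂)
        + (∫ w, k b w ∂ν₁) + (∫ u, ∫ w, k u w ∂ν₂ ∂ν₁))
        - (∫ w, k u₁ w ∂ν₁) - (∫ w, k b w ∂ν₂)) ∂ν₁ :=
      integral_congr_ae (Filter.Eventually.of_forall fun u₁ => F11 u₁ b)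
    rw [h1]
    have := int6 ν₁ (fun u => k u b) (fun u => ∫ w, k u w ∂ν₂) (fun _ => ∫ w, k b w ∂ν₁)
      (fun _ => ∫ u, ∫ w, k u w ∂ν₂ ∂ν₁) (fun u => ∫ w, k u w ∂ν₁) (fun _ => ∫ w, k b w ∂ν₂)
      (hsy b) hm2ν1 (integrable_const _) (integrable_const _) hm1ν1 (integrable_const _)
    simpa [hsyI] using this
  have FMean : hMean ν₁ ν₂ k
      = (1 / 2) * ((∫ u, ∫ w, k u w ∂ν₂ ∂ν₁) + (∫ u, ∫ w, k u w ∂ν₂ ∂ν₁)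
          + (∫ u, ∫ w, k u w ∂ν₂ ∂ν₁) + (∫ u, ∫ w, k u w ∂ν₂ ∂ν₁))
        - (∫ v, ∫ w, k v w ∂ν₁ ∂ν₁) - (∫ v, ∫ w, k v w ∂ν₂ ∂ν₂) := by
    have h1 : hMean ν₁ ν₂ k = ∫ u₁, ((1 / 2) * ((∫ w, k u₁ w ∂ν₂) + (∫ w, k u₁ w ∂ν₂)
        + (∫ u, ∫ w, k u w ∂ν₂ ∂ν₁) + (∫ u, ∫ w, k u w ∂ν₂ ∂ν₁))
        - (∫ w, k u₁ w ∂ν₁) - (∫ v, ∫ w, k v w ∂ν₂ ∂ν₂)) ∂ν₁ :=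
      integral_congr_ae (Filter.Eventually.of_forall fun u₁ => F10 u₁)
    rw [h1]
    have := int6 ν₁ (fun u => ∫ w, k u w ∂ν₂) (fun u => ∫ w, k u w ∂ν₂)
      (fun _ => ∫ u, ∫ w, k u w ∂ν₂ ∂ν₁) (fun _ => ∫ u, ∫ w, k u w ∂ν₂ ∂ν₁)
      (fun u => ∫ w, k u w ∂ν₁) (fun _ => ∫ v, ∫ w, k v w ∂ν₂ ∂ν₂)
      hm2ν1 hm2ν1 (integrable_const _) (integrable_const _) hm1ν1 (integrable_const _)
    simpa using this
  intro x₁ x₂ y₁ y₂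
  refine ⟨?_, ?_, ?_⟩ <;>
    simp only [hker, F21, F12, F20, F02, F11, F10, F01, FMean] <;> ring
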